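/- Let F : X → ℝ be a submodular function on a compact rectangle X = ∏_{i=1}^n [ℓ_i, u_i]. Then for all x, y ∈ X, setting w = [x − y]^+ (componentwise), one has F(x ⊔ y) − F(y) ≥ Σ_{t=1}^n ρ_t(w_t | (x ⊔ y) − w_t e_t), where x ⊔ y is the componentwise maximum and e_t the t-th standard basis vector. -/

import Mathlib

/-- For a submodular function `F` on the compact rectangle `X = Icc ℓ u`,
for all `x, y ∈ X`, with `w = [x − y]⁺` componentwise,
`F (x ⊔ y) − F y ≥ ∑ t ρ_t(w_t | (x ⊔ y) − w_t e_t)`,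
where `ρ_t(δ | v) = F (v + δ e_t) − F v`. -/
theorem stmt_2 {n : ℕ} (hn : 1 ≤ n) (ℓ u : Fin n → ℝ) (hlu : ∀ i, ℓ i < u i)
    (F : (Fin n → ℝ) → ℝ)
    (hsub : ∀ x ∈ Set.Icc ℓ u, ∀ y ∈ Set.Icc ℓ u, F (x ⊔ y) + F (x ⊓ y) ≤ F x + F y)
    (x y : Fin n → ℝ) (hx : x ∈ Set.Icc ℓ u) (hy : y ∈ Set.Icc ℓ u)
    (w : Fin n → ℝ) (hw : ∀ t, w t = max (x t - y t) 0) :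
    ∑ t : Fin n, (F (x ⊔ y) - F ((x ⊔ y) - Pi.single t (w t))) ≤ F (x ⊔ y) - F y := by
  set z : Fin n → ℝ := x ⊔ y with hz
  have hyz : ∀ i, y i ≤ z i := fun i => le_sup_right (a := x i)
  have hzmem : z ∈ Set.Icc ℓ u := ⟨fun i => le_trans (hy.1 i) (hyz i),
    fun i => sup_le (hx.2 i) (hy.2 i)⟩
  set g : ℕ → (Fin n → ℝ) := fun k i => if (i : ℕ) < k then y i else z i with hg
  have hg0 : g 0 = z := funext fun i => by simp [hg]
  have hgn : g n = y := funext fun i => by simp [hg, i.isLt]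
  have hgm : ∀ k, g k ∈ Set.Icc ℓ u := by
    intro k
    constructor <;> intro i <;> by_cases h : (i : ℕ) < k <;>
      simp [hg, h, hy.1 i, hy.2 i, hzmem.1 i, hzmem.2 i]
  have key : ∀ t : Fin n, F z - F (z - Pi.single t (w t)) ≤ F (g t) - F (g (t + 1)) := by
    intro t
    have ha : z - Pi.single t (w t) = Function.update z t (y t) := by
      funext i
      by_cases h : i = t
      · subst h
        simp only [Pi.sub_apply, Pi.single_eq_same, Function.update_self, hw]
        rcases le_total (x i) (y i) with h1 | h1
        · simp [hz, Pi.sup_apply, max_eq_right h1, max_eq_right (sub_nonpos.mpr h1)]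
        · simp only [hz, Pi.sup_apply, max_eq_left h1,
            max_eq_left (sub_nonneg.mpr h1)]
          ring
      · simp [Pi.single_eq_of_ne h, Function.update_of_ne h]
    rw [ha]
    set a : Fin n → ℝ := Function.update z t (y t) with hadef
    have hamem : a ∈ Set.Icc ℓ u := by
      constructor <;> intro i <;> by_cases h : i = t
      · subst h; simp [hadef, hy.1 i]
      · simp [hadef, Function.update_of_ne h, hzmem.1 i]
      · subst h; simp [hadef, hy.2 i]
      · simp [hadef, Function.update_of_ne h, hzmem.2 i]
    have hsup : a ⊔ g t = z := by
      funext i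
      by_cases h : i = t
      · subst h
        simp [hadef, hg, Pi.sup_apply, sup_eq_right.mpr (hyz i)]
      · have : a i = z i := Function.update_of_ne h _ _
        simp only [Pi.sup_apply, this, hg]
        split
        · exact sup_eq_left.mpr (hyz i)
        · exact sup_idem _
    have hinf : a ⊓ g t = g (t + 1) := by
      funext i
      by_cases h : i = t
      · subst h
        simp [hadef, hg, Pi.inf_apply, inf_eq_left.mpr (hyz i)]
      · have hai : a i = z i := Function.update_of_ne h _ _
        have hne : (i : ℕ) ≠ (t : ℕ) := fun hc => h (Fin.ext hc)
        simp only [Pi.inf_apply, hai, hg]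
        rcases lt_or_gt_of_ne hne with h1 | h1
        · rw [if_pos h1, if_pos (h1.trans (Nat.lt_succ_self _)),
            inf_eq_right.mpr (hyz i)]
        · rw [if_neg (not_lt.mpr h1.le), if_neg (not_lt.mpr h1), inf_idem]
    have := hsub a hamem (g t) (hgm t)
    rw [hsup, hinf] at this
    linarith
  have hsum : ∑ t : Fin n, (F (g t) - F (g (t + 1))) = F z - F y := by
    rw [Fin.sum_univ_eq_sum_range (fun k => F (g k) - F (g (k + 1))),
      Finset.sum_range_sub' (fun k => F (g k)), hg0, hgn]
  calc ∑ t : Fin n, (F z - F (z - Pi.single t (w t)))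
      ≤ ∑ t : Fin n, (F (g t) - F (g (t + 1))) := Finset.sum_le_sum fun t _ => key t
    _ = F z - F y := hsum
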